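/- Let (W, ε_W), (A, ε_A), (B, ε_B) be augmented commutative ℝ-algebras and let f, g : A → B be ℝ-algebra homomorphisms satisfying ε_B ∘ f = ε_A and ε_B ∘ g = ε_A. Let E = {a ∈ A : f(a) = g(a)} be their equalizer subalgebra, augmented by the restriction of ε_A. Then the image of the subalgebra W ⊗̃ E under the injective ℝ-algebra homomorphism id_W ⊗ (E ↪ A) : W ⊗ E → W ⊗ A equals the intersection of W ⊗̃ A with the equalizer subalgebra {x ∈ W ⊗ A : (id_W ⊗ f)(x) = (id_W ⊗ g)(x)}. (This is the equalizer case of the statement that reduced tensor product with W commutes with finite limits.) -/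

import Mathlib

open TensorProduct Polynomial

noncomputable section

/-- The first projection `p₁ : A ⊗ B →ₐ[ℝ] B`, `a ⊗ b ↦ ε_A a • b`. -/
def p1 {A B : Type} [CommRing A] [CommRing B] [Algebra ℝ A] [Algebra ℝ B]
    (εA : A →ₐ[ℝ] ℝ) : (A ⊗[ℝ] B) →ₐ[ℝ] B :=
  Algebra.TensorProduct.productMap ((Algebra.ofId ℝ B).comp εA) (AlgHom.id ℝ B)

/-- The second projection `p₀ : A ⊗ B →ₐ[ℝ] B`, `a ⊗ b ↦ (ε_A a * ε_B b) • 1`. -/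
def p0 {A B : Type} [CommRing A] [CommRing B] [Algebra ℝ A] [Algebra ℝ B]
    (εA : A →ₐ[ℝ] ℝ) (εB : B →ₐ[ℝ] ℝ) : (A ⊗[ℝ] B) →ₐ[ℝ] B :=
  Algebra.TensorProduct.productMap ((Algebra.ofId ℝ B).comp εA) ((Algebra.ofId ℝ B).comp εB)

/-- The reduced tensor product `A ⊗̃ B`: the equalizer subalgebra of `p₁` and `p₀`. -/
def redT {A B : Type} [CommRing A] [CommRing B] [Algebra ℝ A] [Algebra ℝ B]
    (εA : A →ₐ[ℝ] ℝ) (εB : B →ₐ[ℝ] ℝ) : Subalgebra ℝ (A ⊗[ℝ] B) :=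
  AlgHom.equalizer (p1 εA) (p0 εA εB)

-- naturality of p1
lemma p1_nat {W A B : Type} [CommRing W] [CommRing A] [CommRing B]
    [Algebra ℝ W] [Algebra ℝ A] [Algebra ℝ B]
    (εW : W →ₐ[ℝ] ℝ) (h : A →ₐ[ℝ] B) :
    (p1 εW).comp (Algebra.TensorProduct.map (AlgHom.id ℝ W) h) = h.comp (p1 εW) := by
  ext x
  · simp [p1, Algebra.ofId_apply, AlgHom.commutes]
  · simp [p1]

lemma p0_nat {W A B : Type} [CommRing W] [CommRing A] [CommRing B]
    [Algebra ℝ W] [Algebra ℝ A] [Algebra ℝ B]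
    (εW : W →ₐ[ℝ] ℝ) (εB : B →ₐ[ℝ] ℝ) (h : A →ₐ[ℝ] B) :
    (p0 εW εB).comp (Algebra.TensorProduct.map (AlgHom.id ℝ W) h) = h.comp (p0 εW (εB.comp h)) := by
  ext x
  · simp [p0, Algebra.ofId_apply]
  · simp [p0, Algebra.ofId_apply]

lemma map_toLin {W A B : Type} [CommRing W] [CommRing A] [CommRing B]
    [Algebra ℝ W] [Algebra ℝ A] [Algebra ℝ B] (h : A →ₐ[ℝ] B) :
    (Algebra.TensorProduct.map (AlgHom.id ℝ W) h).toLinearMap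
      = LinearMap.lTensor W h.toLinearMap := by
  apply TensorProduct.ext'
  intro w a
  simp

lemma map_apply {W A B : Type} [CommRing W] [CommRing A] [CommRing B]
    [Algebra ℝ W] [Algebra ℝ A] [Algebra ℝ B] (h : A →ₐ[ℝ] B) (y : W ⊗[ℝ] A) :
    Algebra.TensorProduct.map (AlgHom.id ℝ W) h y = LinearMap.lTensor W h.toLinearMap y := by
  rw [← AlgHom.toLinearMap_apply, map_toLin]


/-- Reduced tensoring with `W` preserves equalizers: the image of `W ⊗̃ E` in `W ⊗ A`
is the intersection of `W ⊗̃ A` with the equalizer of `id_W ⊗ f` and `id_W ⊗ g`. -/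
theorem reduced_tensor_preserves_equalizer (W A B : Type)
    [CommRing W] [CommRing A] [CommRing B]
    [Algebra ℝ W] [Algebra ℝ A] [Algebra ℝ B]
    (εW : W →ₐ[ℝ] ℝ) (εA : A →ₐ[ℝ] ℝ) (εB : B →ₐ[ℝ] ℝ)
    (f g : A →ₐ[ℝ] B) (hf : εB.comp f = εA) (hg : εB.comp g = εA) :
    Subalgebra.map
        (Algebra.TensorProduct.map (AlgHom.id ℝ W) (AlgHom.equalizer f g).val)
        (redT εW (εA.comp (AlgHom.equalizer f g).val)) =
      redT εW εA ⊓
        AlgHom.equalizer (Algebra.TensorProduct.map (AlgHom.id ℝ W) f)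
          (Algebra.TensorProduct.map (AlgHom.id ℝ W) g) := by
  set E := AlgHom.equalizer f g
  set ι := E.val
  have hfg : f.comp ι = g.comp ι := by
    ext ⟨a, ha⟩
    exact ha
  -- exactness at the module level
  have hexact : Function.Exact ι.toLinearMap (f.toLinearMap - g.toLinearMap) := by
    intro a
    constructor
    · intro ha
      have : f a = g a := by
        have := sub_eq_zero.mp ha
        exact this
      exact ⟨⟨a, this⟩, rfl⟩
    · rintro ⟨⟨a, ha⟩, rfl⟩
      simpa [ι] using sub_eq_zero.mpr ha
  have hlex := Module.Flat.lTensor_exact W hexact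
  apply le_antisymm
  · rintro x ⟨y, hy, rfl⟩
    have hy1 : p1 εW y = p0 εW (εA.comp ι) y := hy
    constructor
    · show p1 εW (Algebra.TensorProduct.map (AlgHom.id ℝ W) ι y)
        = p0 εW εA (Algebra.TensorProduct.map (AlgHom.id ℝ W) ι y)
      have h1 := congrArg (fun k => k y) (p1_nat εW ι)
      have h2 := congrArg (fun k => k y) (p0_nat εW εA ι)
      simp only [AlgHom.comp_apply] at h1 h2
      rw [h1, h2, hy1]
    · show _ = _
      have : (Algebra.TensorProduct.map (AlgHom.id ℝ W) f).comp
          (Algebra.TensorProduct.map (AlgHom.id ℝ W) ι)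
          = (Algebra.TensorProduct.map (AlgHom.id ℝ W) g).comp
          (Algebra.TensorProduct.map (AlgHom.id ℝ W) ι) := by
        rw [← Algebra.TensorProduct.map_comp, ← Algebra.TensorProduct.map_comp, hfg]
      exact congrArg (fun k => k y) this
  · rintro x ⟨hx1, hx2⟩
    have hx2' : LinearMap.lTensor W (f.toLinearMap - g.toLinearMap) x = 0 := by
      rw [LinearMap.lTensor_sub]
      simp only [LinearMap.sub_apply, ← map_apply]
      rw [hx2]; simp
    obtain ⟨y, hy⟩ := (hlex x).mp hx2'
    have hyx : Algebra.TensorProduct.map (AlgHom.id ℝ W) ι y = x := by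
      rw [map_apply, hy]
    refine ⟨y, ?_, hyx⟩
    show p1 εW y = p0 εW (εA.comp ι) y
    have h1 := congrArg (fun k => k y) (p1_nat εW ι)
    have h2 := congrArg (fun k => k y) (p0_nat εW εA ι)
    simp only [AlgHom.comp_apply] at h1 h2
    have : ι (p1 εW y) = ι (p0 εW (εA.comp ι) y) := by
      rw [← h1, ← h2, hyx]
      exact hx1
    exact Subtype.ext this

end
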